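/- Let α_1,…,α_n be pairwise distinct elements of a finite field F_q, let δ ∈ F_q, and let k be an integer with 6 ≤ 2k ≤ n; take r = 1. Then G_2 · H_2ᵀ = 0 and the rows of H_2 are linearly independent over F_q, where S_2 = S_2(α_1,…,α_n) = (∑_{i=1}^n α_i)² − ∑_{1≤i<j≤n} α_i α_j; consequently H_2 is a parity check matrix for the code C_2 generated by G_2. -/

import Mathlib

open Finset Matrix

/-- Elementary symmetric polynomial `σ_t` evaluated at the values `x 0, …, x (m-1)`. -/
def esymmV {F : Type*} [CommRing F] {m : ℕ} (t : ℕ) (x : Fin m → F) : F :=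
  ∑ A ∈ Finset.univ.powersetCard t, ∏ i ∈ A, x i

/-- Complete homogeneous symmetric polynomial `S_t` evaluated at `x 0, …, x (m-1)`. -/
def hsymmV {F : Type*} [CommRing F] {m : ℕ} (t : ℕ) (x : Fin m → F) : F :=
  ∑ d ∈ Finset.Nat.antidiagonalTuple m t, ∏ i, x i ^ d i

/-- The exponent of the `i`-th row (0-indexed): the elements of
`{0,…,k−r−1} ∪ {k−r+1,…,k}` in increasing order. -/
def expo (k r : ℕ) (i : Fin k) : ℕ := if (i : ℕ) < k - r then (i : ℕ) else (i : ℕ) + 1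

/-- The Vandermonde product `∏_{i<j} (α_j − α_i)`. -/
def vand {F : Type*} [CommRing F] {n : ℕ} (α : Fin n → F) : F :=
  ∏ i : Fin n, ∏ j ∈ Finset.Ioi i, (α j - α i)

/-- The matrix `G_{r,k}`: rows are `(α_1^e, …, α_n^e)` for
`e ∈ {0,…,k−r−1} ∪ {k−r+1,…,k}` in increasing order. -/
def Grk {F : Type*} [Field F] {n : ℕ} (α : Fin n → F) (k r : ℕ) : Matrix (Fin k) (Fin n) F :=
  Matrix.of fun i j => α j ^ expo k r i

/-- The matrix `G_1`: `G_{r,k}` with the extra column `(0,…,0,1)ᵀ` appended. -/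
def G1 {F : Type*} [Field F] {n : ℕ} (α : Fin n → F) (k r : ℕ) :
    Matrix (Fin k) (Fin (n + 1)) F :=
  Matrix.of fun i j =>
    if hj : (j : ℕ) < n then α ⟨j, hj⟩ ^ expo k r i
    else if (i : ℕ) = k - 1 then 1 else 0

/-- The matrix `G_2`: `G_1` with the extra column `(0,…,0,1,δ)ᵀ` appended
(entry `1` in row `k−1`, i.e. index `k−2`, and `δ` in row `k`, i.e. index `k−1`). -/
def G2 {F : Type*} [Field F] {n : ℕ} (α : Fin n → F) (k r : ℕ) (δ : F) :
    Matrix (Fin k) (Fin (n + 2)) F :=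
  Matrix.of fun i j =>
    if hj : (j : ℕ) < n then α ⟨j, hj⟩ ^ expo k r i
    else if (j : ℕ) = n then (if (i : ℕ) = k - 1 then 1 else 0)
    else (if (i : ℕ) = k - 2 then 1 else if (i : ℕ) = k - 1 then δ else 0)

/-- `u_i = ∏_{j ≠ i} (α_i − α_j)⁻¹`. -/
def uCoef {F : Type*} [Field F] {n : ℕ} (α : Fin n → F) (i : Fin n) : F :=
  ∏ j ∈ Finset.univ.erase i, (α i - α j)⁻¹

/-- `Λ_{r,i} = ∑_{j=0}^{r} (−1)^j σ_j α_i^{(n−k)+(r−1)−j}`. -/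
def Lam {F : Type*} [Field F] {n : ℕ} (α : Fin n → F) (k r : ℕ) (i : Fin n) : F :=
  ∑ j ∈ Finset.range (r + 1), (-1 : F) ^ j * esymmV j α * α i ^ ((n - k) + (r - 1) - j)

/-- Every `k×k` submatrix of `G` is nonsingular. -/
def allSubNonsing {F : Type*} [Field F] {k m : ℕ} (G : Matrix (Fin k) (Fin m) F) : Prop :=
  ∀ c : Fin k → Fin m, Function.Injective c → (G.submatrix id c).det ≠ 0

/-- The linear code spanned by the rows of `G`. -/
def rowSpan {F : Type*} [Field F] {k m : ℕ} (G : Matrix (Fin k) (Fin m) F) :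
    Submodule F (Fin m → F) :=
  Submodule.span F (Set.range fun i => G i)

/-- The dual code `C^⊥ = {x : ∑ x_i c_i = 0 for all c ∈ C}`, as a set. -/
def dualSet {F : Type*} [Field F] {m : ℕ} (C : Set (Fin m → F)) : Set (Fin m → F) :=
  {x | ∀ c ∈ C, ∑ i, x i * c i = 0}

/-- The extended code of `C` with respect to `w`. -/
def extCode {F : Type*} [Field F] {m : ℕ} (C : Set (Fin m → F)) (w : Fin m → F) :
    Set (Fin (m + 1) → F) :=
  {y | ∃ c ∈ C, (∀ i : Fin m, y (Fin.castSucc i) = c i) ∧ y (Fin.last m) = ∑ i, w i * c i}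

/-- The parity check matrix `H_{r,k}`: the first `n−k−1` rows are
`(u_1 α_1^e, …, u_n α_n^e)` for `e = 0,…,n−k−2` and the last row is
`(u_1 Λ_{r,1}, …, u_n Λ_{r,n})`. -/
def Hrk {F : Type*} [Field F] {n : ℕ} (α : Fin n → F) (k r : ℕ) :
    Matrix (Fin (n - k)) (Fin n) F :=
  Matrix.of fun i j =>
    if (i : ℕ) < n - k - 1 then uCoef α j * α j ^ (i : ℕ)
    else uCoef α j * Lam α k r j

/-- The parity check matrix `H_1`. -/
def H1 {F : Type*} [Field F] {n : ℕ} (α : Fin n → F) (k r : ℕ) :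
    Matrix (Fin (n - k + 1)) (Fin (n + 1)) F :=
  Matrix.of fun i j =>
    if hj : (j : ℕ) < n then
      (if (i : ℕ) < n - k - 1 then uCoef α ⟨j, hj⟩ * α ⟨j, hj⟩ ^ (i : ℕ)
       else if (i : ℕ) = n - k - 1 then uCoef α ⟨j, hj⟩ * Lam α k r ⟨j, hj⟩
       else uCoef α ⟨j, hj⟩ * α ⟨j, hj⟩ ^ (n - k - 1))
    else (if (i : ℕ) = n - k then -1 else 0)

/-- The parity check matrix `H_2` (case `2 ≤ r`), with parameter `b`. -/
def H2 {F : Type*} [Field F] {n : ℕ} (α : Fin n → F) (k r : ℕ) (b : F) :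
    Matrix (Fin (n - k + 2)) (Fin (n + 2)) F :=
  Matrix.of fun i j =>
    if hj : (j : ℕ) < n then
      (if (i : ℕ) < n - k - 1 then uCoef α ⟨j, hj⟩ * α ⟨j, hj⟩ ^ (i : ℕ)
       else if (i : ℕ) = n - k - 1 then uCoef α ⟨j, hj⟩ * Lam α k r ⟨j, hj⟩
       else if (i : ℕ) = n - k then uCoef α ⟨j, hj⟩ * α ⟨j, hj⟩ ^ (n - k - 1)
       else uCoef α ⟨j, hj⟩ * α ⟨j, hj⟩ ^ (n - k))
    else if (j : ℕ) = n then
      (if (i : ℕ) = n - k then -1 else if (i : ℕ) = n - k + 1 then b else 0)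
    else (if (i : ℕ) = n - k + 1 then -1 else 0)

/-- The parity check matrix `H_2` in the case `r = 1`: the last row is
`(u_1 α_1^{n−k+1}, …, u_n α_n^{n−k+1}, δ − S_2, −1)` where
`S_2 = (∑ α_i)² − ∑_{i<j} α_i α_j`. -/
def H2r1 {F : Type*} [Field F] {n : ℕ} (α : Fin n → F) (k : ℕ) (δ : F) :
    Matrix (Fin (n - k + 2)) (Fin (n + 2)) F :=
  Matrix.of fun i j =>
    if hj : (j : ℕ) < n then
      (if (i : ℕ) < n - k - 1 then uCoef α ⟨j, hj⟩ * α ⟨j, hj⟩ ^ (i : ℕ)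
       else if (i : ℕ) = n - k - 1 then uCoef α ⟨j, hj⟩ * Lam α k 1 ⟨j, hj⟩
       else if (i : ℕ) = n - k then uCoef α ⟨j, hj⟩ * α ⟨j, hj⟩ ^ (n - k - 1)
       else uCoef α ⟨j, hj⟩ * α ⟨j, hj⟩ ^ (n - k + 1))
    else if (j : ℕ) = n then
      (if (i : ℕ) = n - k then -1
       else if (i : ℕ) = n - k + 1 then
         δ - ((∑ s, α s) ^ 2 - ∑ s : Fin n, ∑ t ∈ Finset.Ioi s, α s * α t)
       else 0)
    else (if (i : ℕ) = n - k + 1 then -1 else 0)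


section MyAux
open Polynomial

section Aux
variable {F : Type*} [Field F] {n : ℕ} (α : Fin n → F)

lemma basis_coeff (hα : Function.Injective α) (i : Fin n) :
    (Lagrange.basis Finset.univ α i).coeff (n - 1) = uCoef α i := by
  have hb : Lagrange.basis Finset.univ α i
      = Polynomial.C (uCoef α i) * Lagrange.nodal (Finset.univ.erase i) α := by
    rw [Lagrange.basis, uCoef, Lagrange.nodal, map_prod, ← Finset.prod_mul_distrib]
    exact Finset.prod_congr rfl fun j _ => rfl
  have hcard : (Finset.univ.erase i).card = n - 1 := by
    rw [Finset.card_erase_of_mem (Finset.mem_univ i), Finset.card_univ, Fintype.card_fin]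
  rw [hb, Polynomial.coeff_C_mul, ← hcard]
  have : (Lagrange.nodal (Finset.univ.erase i) α).natDegree = (Finset.univ.erase i).card :=
    Lagrange.natDegree_nodal
  rw [← this, (Lagrange.nodal_monic).coeff_natDegree, mul_one]

lemma sum_u_eval (hα : Function.Injective α) {p : F[X]} (hp : p.degree < n) :
    ∑ i, uCoef α i * p.eval (α i) = p.coeff (n - 1) := by
  have h := Lagrange.eq_interpolate (s := (Finset.univ : Finset (Fin n))) (v := α)
    (hα.injOn) (by simpa using hp)
  conv_rhs => rw [h]
  rw [Lagrange.interpolate_apply, Polynomial.finset_sum_coeff]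
  refine Finset.sum_congr rfl fun i _ => ?_
  rw [Polynomial.coeff_C_mul, basis_coeff α hα i, mul_comm]

end Aux

section Aux2
variable {F : Type*} [Field F] {n : ℕ} (α : Fin n → F)

lemma nodal_coeff (c : ℕ) (hc : c ≤ n) :
    (Lagrange.nodal (Finset.univ : Finset (Fin n)) α).coeff c
      = (-1) ^ (n - c) * esymmV (n - c) α := by
  have hcard : Multiset.card ((Finset.univ : Finset (Fin n)).val.map α) = n := by
    simp
  rw [Lagrange.nodal_eq, Finset.prod_eq_multiset_prod, show (Multiset.map (fun i => X - C (α i)) Finset.univ.val).prod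
      = (Multiset.map (fun t => X - C t) (Finset.univ.val.map α)).prod by
      rw [Multiset.map_map]; rfl,
    Multiset.prod_X_sub_C_coeff _ (by rw [hcard]; exact hc), hcard,
    Finset.esymm_map_val]
  rfl

end Aux2

section Aux3
variable {F : Type*} [Field F] {n : ℕ} (α : Fin n → F)

lemma esymmV_zero : esymmV 0 α = 1 := by
  simp [esymmV]

lemma esymmV_one (hn : 0 < n) : esymmV 1 α = ∑ i, α i := by
  simp [esymmV, Finset.powersetCard_one, Finset.sum_map]

/-- power sum abbreviation -/
noncomputable def psum (m : ℕ) : F := ∑ i, uCoef α i * α i ^ m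

lemma psum_eq (hα : Function.Injective α) {m : ℕ} (hm : m < n) :
    psum α m = if m = n - 1 then 1 else 0 := by
  have h := sum_u_eval α hα (p := (X : F[X]) ^ m)
    (by rw [Polynomial.degree_X_pow]; exact_mod_cast hm)
  simp only [Polynomial.eval_pow, Polynomial.eval_X] at h
  rw [psum, h, Polynomial.coeff_X_pow]
  by_cases h' : m = n - 1 <;> simp [h', eq_comm]

lemma psum_n (hα : Function.Injective α) (hn : 0 < n) :
    psum α n = ∑ i, α i := by
  set f : F[X] := Lagrange.nodal (Finset.univ : Finset (Fin n)) α with hf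
  have hdegf : f.degree = (n : WithBot ℕ) := by
    rw [hf, Lagrange.degree_nodal]; simp
  have hdeg : ((X : F[X]) ^ n - f).degree < n := by
    have := Polynomial.degree_sub_lt (p := (X : F[X])^n) (q := f)
      (by rw [Polynomial.degree_X_pow, hdegf]) (pow_ne_zero n Polynomial.X_ne_zero)
      (by rw [Polynomial.leadingCoeff_X_pow, hf, (Lagrange.nodal_monic).leadingCoeff])
    rwa [Polynomial.degree_X_pow] at this
  have h := sum_u_eval α hα hdeg
  have heval : ∀ i : Fin n, ((X : F[X]) ^ n - f).eval (α i) = α i ^ n := by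
    intro i
    simp [hf, Lagrange.eval_nodal_at_node (Finset.mem_univ i)]
  simp only [heval] at h
  rw [psum, h, Polynomial.coeff_sub, Polynomial.coeff_X_pow,
    if_neg (by omega), nodal_coeff α (n-1) (by omega)]
  have h1 : n - (n - 1) = 1 := by omega
  rw [h1, esymmV_one α hn, pow_one]
  ring

end Aux3

section Aux4
variable {F : Type*} [Field F] {n : ℕ} (α : Fin n → F)

lemma esymmV_two : esymmV 2 α = ∑ s : Fin n, ∑ t ∈ Finset.Ioi s, α s * α t := by
  rw [esymmV, Finset.sum_sigma']
  refine (Finset.sum_bij (fun p _ => ({p.1, p.2} : Finset (Fin n))) ?_ ?_ ?_ ?_).symm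
  · rintro ⟨s, t⟩ hp
    simp only [Finset.mem_sigma, Finset.mem_univ, Finset.mem_Ioi, true_and] at hp
    rw [Finset.mem_powersetCard_univ, Finset.card_pair (ne_of_lt hp)]
  · rintro ⟨s, t⟩ hp ⟨s', t'⟩ hp' h
    simp only [Finset.mem_sigma, Finset.mem_univ, Finset.mem_Ioi, true_and] at hp hp'
    have : s = s' ∧ t = t' ∨ s = t' ∧ t = s' := Set.pair_eq_pair_iff.mp (by
      have h2 := congrArg (fun A : Finset (Fin n) => (A : Set (Fin n))) h
      simpa using h2)
    rcases this with ⟨h1, h2⟩ | ⟨h1, h2⟩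
    · simp [h1, h2]
    · exfalso; subst h1 h2; exact absurd hp' (by omega)
  · intro A hA
    rw [Finset.mem_powersetCard_univ] at hA
    obtain ⟨a, b, hab, rfl⟩ := Finset.card_eq_two.mp hA
    rcases lt_or_gt_of_ne hab with h | h
    · exact ⟨⟨a, b⟩, by simp [Finset.mem_Ioi, h], rfl⟩
    · exact ⟨⟨b, a⟩, by simp [Finset.mem_Ioi, h], (Finset.pair_comm a b).symm⟩
  · rintro ⟨s, t⟩ hp
    simp only [Finset.mem_sigma, Finset.mem_univ, Finset.mem_Ioi, true_and] at hp
    rw [Finset.prod_pair (ne_of_lt hp)]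

lemma psum_n1 (hα : Function.Injective α) (hn : 2 ≤ n) :
    psum α (n + 1) = (∑ i, α i) ^ 2 - ∑ s : Fin n, ∑ t ∈ Finset.Ioi s, α s * α t := by
  set e1 : F := ∑ i, α i with he1
  set f : F[X] := Lagrange.nodal (Finset.univ : Finset (Fin n)) α with hf
  have hndeg : f.natDegree = n := by rw [hf, Lagrange.natDegree_nodal]; simp
  have hC : ∀ c : ℕ, c ≤ n → f.coeff c = (-1) ^ (n - c) * esymmV (n - c) α := fun c hc => by
    rw [hf]; exact nodal_coeff α c hc
  set g : F[X] := (X : F[X]) ^ (n + 1) - ((X : F[X]) + C e1) * f with hg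
  have hgc : ∀ m : ℕ, m = n ∨ n + 1 ≤ m → g.coeff m = 0 := by
    intro m hm
    have hsplit : g.coeff m = (X ^ (n+1) : F[X]).coeff m - (f.coeff (m - 1) + e1 * f.coeff m) := by
      obtain ⟨m', rfl⟩ : ∃ m', m = m' + 1 := ⟨m - 1, by omega⟩
      rw [hg, Polynomial.coeff_sub, add_mul, Polynomial.coeff_add, Polynomial.coeff_X_mul,
        Polynomial.coeff_C_mul]
      simp
    rcases hm with rfl | hm
    · rw [hsplit, Polynomial.coeff_X_pow, if_neg (by omega),
        hC (m - 1) (by omega), hC m le_rfl]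
      have h1 : m - (m - 1) = 1 := by omega
      have h2 : m - m = 0 := by omega
      rw [h1, h2, esymmV_one α (by omega), esymmV_zero, pow_one, pow_zero, ← he1]
      ring
    · rcases eq_or_lt_of_le hm with rfl | hm'
      · have hfm : f.Monic := hf ▸ Lagrange.nodal_monic
        have hfn1 : f.coeff (n + 1) = 0 :=
          Polynomial.coeff_eq_zero_of_natDegree_lt (by omega)
        rw [hsplit, Polynomial.coeff_X_pow, if_pos rfl, Nat.add_sub_cancel, hfn1,
          ← hndeg, hfm.coeff_natDegree]
        ring
      · have hf1 : f.coeff (m - 1) = 0 :=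
          Polynomial.coeff_eq_zero_of_natDegree_lt (by omega)
        have hf2 : f.coeff m = 0 :=
          Polynomial.coeff_eq_zero_of_natDegree_lt (by omega)
        rw [hsplit, Polynomial.coeff_X_pow, if_neg (by omega), hf1, hf2]
        ring
  have hdeg : g.degree < n := by
    rw [Polynomial.degree_lt_iff_coeff_zero]
    intro m hm
    have hm' : n ≤ m := by exact_mod_cast hm
    exact hgc m (by omega)
  have h := sum_u_eval α hα hdeg
  have heval : ∀ i : Fin n, g.eval (α i) = α i ^ (n + 1) := by
    intro i
    simp [hg, hf, Lagrange.eval_nodal_at_node (Finset.mem_univ i)]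
  simp only [heval] at h
  rw [psum, h, hg, Polynomial.coeff_sub, Polynomial.coeff_X_pow, if_neg (by omega)]
  have hsplit : (((X : F[X]) + C e1) * f).coeff (n - 1) = f.coeff (n - 2) + e1 * f.coeff (n-1) := by
    have h1 : n - 1 = (n - 2) + 1 := by omega
    rw [add_mul, Polynomial.coeff_add, h1, Polynomial.coeff_X_mul, Polynomial.coeff_C_mul]
  rw [hsplit, hC (n-2) (by omega), hC (n-1) (by omega)]
  have h1 : n - (n - 2) = 2 := by omega
  have h2 : n - (n - 1) = 1 := by omega
  rw [h1, h2, esymmV_one α (by omega), esymmV_two α, ← he1]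
  ring
end Aux4

end MyAux


section Part1
variable {F : Type*} [Field F] {n : ℕ} (α : Fin n → F)

lemma sum_split (f : Fin (n + 2) → F) :
    ∑ j, f j = (∑ j : Fin n, f ⟨(j : ℕ), by omega⟩)
      + f ⟨n, by omega⟩ + f ⟨n + 1, by omega⟩ := by
  rw [Fin.sum_univ_castSucc, Fin.sum_univ_castSucc]
  rfl

lemma Lam_eq (hn : 0 < n) (k : ℕ) (j : Fin n) :
    Lam α k 1 j = α j ^ (n - k) - (∑ i, α i) * α j ^ (n - k - 1) := by
  simp [Lam, Finset.sum_range_succ, esymmV_zero, esymmV_one α hn]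
  ring

lemma sum_pow_u (e c : ℕ) :
    ∑ j : Fin n, α j ^ e * (uCoef α j * α j ^ c) = psum α (e + c) := by
  rw [psum]
  refine Finset.sum_congr rfl fun j _ => ?_
  rw [pow_add]; ring

end Part1

section Entries
variable {F : Type*} [Field F] {n : ℕ} (α : Fin n → F) (k r : ℕ) (δ : F)

lemma G2_apply_lt (i : Fin k) (j : Fin n) (h : (j : ℕ) < n + 2) :
    G2 α k r δ i ⟨(j : ℕ), h⟩ = α j ^ expo k r i := by
  simp [G2, j.isLt]

lemma G2_apply_n (i : Fin k) (h : n < n + 2) :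
    G2 α k r δ i ⟨n, h⟩ = if (i : ℕ) = k - 1 then 1 else 0 := by
  simp [G2]

lemma G2_apply_n1 (i : Fin k) (h : n + 1 < n + 2) :
    G2 α k r δ i ⟨n + 1, h⟩
      = if (i : ℕ) = k - 2 then 1 else if (i : ℕ) = k - 1 then δ else 0 := by
  simp [G2]

lemma H2_apply_lt (t : Fin (n - k + 2)) (j : Fin n) (h : (j : ℕ) < n + 2) :
    H2r1 α k δ t ⟨(j : ℕ), h⟩
      = if (t : ℕ) < n - k - 1 then uCoef α j * α j ^ (t : ℕ)
        else if (t : ℕ) = n - k - 1 then uCoef α j * Lam α k 1 j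
        else if (t : ℕ) = n - k then uCoef α j * α j ^ (n - k - 1)
        else uCoef α j * α j ^ (n - k + 1) := by
  simp [H2r1, j.isLt]

lemma H2_apply_n (t : Fin (n - k + 2)) (h : n < n + 2) :
    H2r1 α k δ t ⟨n, h⟩
      = if (t : ℕ) = n - k then -1
        else if (t : ℕ) = n - k + 1 then
          δ - ((∑ s, α s) ^ 2 - ∑ s : Fin n, ∑ u ∈ Finset.Ioi s, α s * α u)
        else 0 := by
  simp [H2r1]

lemma H2_apply_n1 (t : Fin (n - k + 2)) (h : n + 1 < n + 2) :
    H2r1 α k δ t ⟨n + 1, h⟩ = if (t : ℕ) = n - k + 1 then -1 else 0 := by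
  simp [H2r1]

end Entries

theorem GH_zero {F : Type*} [Field F] {n : ℕ}
    (α : Fin n → F) (hα : Function.Injective α) (δ : F) (k : ℕ)
    (h6 : 6 ≤ 2 * k) (hkn : 2 * k ≤ n) :
    G2 α k 1 δ * (H2r1 α k δ)ᵀ = 0 := by
  have hk3 : 3 ≤ k := by omega
  have hn : k + 3 ≤ n := by omega
  have hps0 : ∀ a : ℕ, a < n - 1 → psum α a = 0 := fun a ha => by
    rw [psum_eq α hα (by omega), if_neg (by omega)]
  have hps1 : psum α (n - 1) = 1 := by
    rw [psum_eq α hα (by omega), if_pos rfl]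
  ext i t
  rw [Matrix.mul_apply, Matrix.zero_apply]
  have hsplit := sum_split (fun j => G2 α k 1 δ i j * (H2r1 α k δ)ᵀ j t)
  rw [hsplit]
  simp only [Matrix.transpose_apply, G2_apply_lt, G2_apply_n, G2_apply_n1,
    H2_apply_lt, H2_apply_n, H2_apply_n1]
  have hik : (i : ℕ) < k := i.isLt
  have htm : (t : ℕ) < n - k + 2 := t.isLt
  have hEle : expo k 1 i ≤ k := by rw [expo]; split <;> omega
  have hElt : (i : ℕ) < k - 1 → expo k 1 i = (i : ℕ) := fun h => by
    rw [expo, if_pos h]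
  have hEk : (i : ℕ) = k - 1 → expo k 1 i = k := fun h => by
    rw [expo, if_neg (by omega)]; omega
  rcases (by omega : (t : ℕ) < n - k - 1 ∨ (t : ℕ) = n - k - 1 ∨ (t : ℕ) = n - k
      ∨ (t : ℕ) = n - k + 1) with ht | ht | ht | ht
  · rw [if_neg (by omega : ¬ (t:ℕ) = n - k), if_neg (by omega : ¬ (t:ℕ) = n - k + 1),
      if_neg (by omega : ¬ (t:ℕ) = n - k + 1)]
    simp only [if_pos ht]
    rw [sum_pow_u, hps0 _ (by omega)]
    ring
  · rw [if_neg (by omega : ¬ (t:ℕ) = n - k), if_neg (by omega : ¬ (t:ℕ) = n - k + 1),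
      if_neg (by omega : ¬ (t:ℕ) = n - k + 1)]
    simp only [if_neg (by omega : ¬ (t:ℕ) < n - k - 1), if_pos ht]
    have hbody : ∀ j : Fin n, α j ^ expo k 1 i * (uCoef α j * Lam α k 1 j)
        = α j ^ expo k 1 i * (uCoef α j * α j ^ (n - k))
          - (∑ s, α s) * (α j ^ expo k 1 i * (uCoef α j * α j ^ (n - k - 1))) := fun j => by
      rw [Lam_eq α (by omega) k j]; ring
    rw [Finset.sum_congr rfl fun j _ => hbody j, Finset.sum_sub_distrib,
      ← Finset.mul_sum, sum_pow_u, sum_pow_u]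
    rcases (by omega : (i : ℕ) < k - 1 ∨ (i : ℕ) = k - 1) with hi | hi
    · rw [hElt hi, hps0 _ (by omega), hps0 _ (by omega)]
      ring
    · rw [hEk hi, (by omega : k + (n - k) = n), (by omega : k + (n - k - 1) = n - 1),
        psum_n α hα (by omega), hps1]
      ring
  · rw [if_pos ht, if_neg (by omega : ¬ (t:ℕ) = n - k + 1)]
    simp only [if_neg (by omega : ¬ (t:ℕ) < n - k - 1),
      if_neg (by omega : ¬ (t:ℕ) = n - k - 1), if_pos ht]
    rw [sum_pow_u]
    rcases (by omega : (i : ℕ) < k - 1 ∨ (i : ℕ) = k - 1) with hi | hi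
    · rw [hElt hi, hps0 _ (by omega), if_neg (by omega : ¬ (i:ℕ) = k - 1)]
      ring
    · rw [hEk hi, (by omega : k + (n - k - 1) = n - 1), hps1, if_pos hi]
      ring
  · rw [if_neg (by omega : ¬ (t:ℕ) = n - k), if_pos ht, if_pos ht]
    simp only [if_neg (by omega : ¬ (t:ℕ) < n - k - 1),
      if_neg (by omega : ¬ (t:ℕ) = n - k - 1), if_neg (by omega : ¬ (t:ℕ) = n - k)]
    rw [sum_pow_u]
    rcases (by omega : (i : ℕ) < k - 2 ∨ (i : ℕ) = k - 2 ∨ (i : ℕ) = k - 1)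
      with hi | hi | hi
    · simp only [if_neg (show ¬ (i:ℕ) = k - 1 by omega),
        if_neg (show ¬ (i:ℕ) = k - 2 by omega)]
      rw [hElt (by omega), hps0 _ (by omega)]
      ring
    · simp only [if_pos hi, if_neg (show ¬ (i:ℕ) = k - 1 by omega)]
      rw [hElt (by omega), (show (i:ℕ) + (n - k + 1) = n - 1 by omega), hps1]
      ring
    · simp only [if_pos hi, if_neg (show ¬ (i:ℕ) = k - 2 by omega)]
      rw [hEk hi, (show k + (n - k + 1) = n + 1 by omega), psum_n1 α hα (by omega)]
      ring


section LI
variable {F : Type*} [Field F] {n : ℕ}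

lemma uCoef_ne_zero (α : Fin n → F) (hα : Function.Injective α) (j : Fin n) :
    uCoef α j ≠ 0 := by
  rw [uCoef]
  refine Finset.prod_ne_zero_iff.mpr fun b hb => ?_
  rw [Finset.mem_erase] at hb
  exact inv_ne_zero (sub_ne_zero_of_ne fun h => hb.1 (hα h).symm)

theorem H_li (α : Fin n → F) (hα : Function.Injective α) (δ : F) (k : ℕ)
    (h6 : 6 ≤ 2 * k) (hkn : 2 * k ≤ n) :
    LinearIndependent F (fun i => H2r1 α k δ i) := by
  have hk3 : 3 ≤ k := by omega
  have hn : k + 3 ≤ n := by omega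
  rw [Fintype.linearIndependent_iff]
  intro g hg
  have hg' : ∀ j : Fin (n + 2), ∑ s, g s * H2r1 α k δ s j = 0 := fun j => by
    have h := congrFun hg j
    simpa [Finset.sum_apply] using h
  set t0 : Fin (n - k + 2) := ⟨n - k, by omega⟩ with ht0
  set t1 : Fin (n - k + 2) := ⟨n - k + 1, by omega⟩ with ht1
  -- last coordinate kills g t1
  have h1 : g t1 = 0 := by
    have h := hg' ⟨n + 1, by omega⟩
    rw [Finset.sum_congr rfl (fun s _ => by rw [H2_apply_n1])] at h
    rw [Finset.sum_eq_single t1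
      (fun b _ hb => by rw [if_neg (fun hc => hb (Fin.ext hc)), mul_zero])
      (by simp)] at h
    rw [if_pos rfl, mul_neg_one, neg_eq_zero] at h
    exact h
  -- coordinate n kills g t0
  have h0 : g t0 = 0 := by
    have h := hg' ⟨n, by omega⟩
    rw [Finset.sum_congr rfl (fun s _ => by rw [H2_apply_n])] at h
    rw [← Finset.sum_subset (Finset.subset_univ ({t0, t1} : Finset (Fin (n - k + 2))))
      (fun b _ hb => by
        simp only [Finset.mem_insert, Finset.mem_singleton, not_or] at hb
        rw [if_neg (fun hc => hb.1 (Fin.ext hc)), if_neg (fun hc => hb.2 (Fin.ext hc)),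
          mul_zero])] at h
    rw [Finset.sum_pair (show t0 ≠ t1 by rw [ht0, ht1, Ne, Fin.mk.injEq]; omega)] at h
    rw [if_pos rfl, if_neg (show ¬ (n - k + 1 = n - k) by omega), if_pos rfl, h1,
      zero_mul, add_zero, mul_neg_one, neg_eq_zero] at h
    exact h
  -- the polynomial
  set e1 : F := ∑ i, α i with he1
  set q : Fin (n - k + 2) → Polynomial F := fun s =>
    if (s : ℕ) < n - k - 1 then Polynomial.X ^ (s : ℕ)
    else if (s : ℕ) = n - k - 1 then
      Polynomial.X ^ (n - k) - Polynomial.C e1 * Polynomial.X ^ (n - k - 1)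
    else if (s : ℕ) = n - k then Polynomial.X ^ (n - k - 1)
    else Polynomial.X ^ (n - k + 1) with hq
  set P : Polynomial F := ∑ s, Polynomial.C (g s) * q s with hP
  have hqdeg : ∀ s, (q s).natDegree ≤ n - k + 1 := by
    intro s
    simp only [hq]
    split_ifs with h1' h2' h3'
    · exact le_trans (Polynomial.natDegree_X_pow_le _) (by omega)
    · refine le_trans (Polynomial.natDegree_sub_le _ _) ?_
      simp only [Polynomial.natDegree_X_pow, sup_le_iff]
      constructor
      · omega
      · exact le_trans (Polynomial.natDegree_C_mul_le _ _)
          (le_trans (Polynomial.natDegree_X_pow_le _) (by omega))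
    · exact le_trans (Polynomial.natDegree_X_pow_le _) (by omega)
    · exact Polynomial.natDegree_X_pow_le _
  have hHq : ∀ (s : Fin (n - k + 2)) (j : Fin n) (hj : (j : ℕ) < n + 2),
      H2r1 α k δ s ⟨(j : ℕ), hj⟩ = uCoef α j * (q s).eval (α j) := by
    intro s j hj
    rw [H2_apply_lt]
    simp only [hq]
    split_ifs with h1' h2' h3'
    · simp
    · rw [Lam_eq α (show 0 < n by omega) k j]
      simp [← he1]
    · simp
    · simp
  have hPeval : ∀ j : Fin n, P.eval (α j) = 0 := by
    intro j
    have h := hg' ⟨(j : ℕ), by omega⟩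
    rw [Finset.sum_congr rfl (fun s _ => by rw [hHq s j])] at h
    have h2 : uCoef α j * P.eval (α j) = 0 := by
      rw [hP, Polynomial.eval_finset_sum, Finset.mul_sum, ← h]
      refine Finset.sum_congr rfl fun s _ => ?_
      simp only [Polynomial.eval_mul, Polynomial.eval_C]
      ring
    exact (mul_eq_zero.mp h2).resolve_left (uCoef_ne_zero α hα j)
  have hPz : P = 0 := by
    refine Polynomial.eq_zero_of_natDegree_lt_card_of_eval_eq_zero P hα hPeval ?_
    rw [Fintype.card_fin]
    refine lt_of_le_of_lt (Polynomial.natDegree_sum_le _ _) ?_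
    rw [Finset.fold_max_lt]
    constructor
    · omega
    · intro s _
      exact lt_of_le_of_lt (le_trans (Polynomial.natDegree_C_mul_le _ _) (hqdeg s)) (by omega)
  have hcoeff : ∀ c : ℕ, ∑ s, g s * (q s).coeff c = 0 := by
    intro c
    have h := congrArg (fun p => Polynomial.coeff p c) hPz
    simpa [hP, Polynomial.finset_sum_coeff, Polynomial.coeff_C_mul] using h
  intro t
  rcases (by omega : (t : ℕ) < n - k - 1 ∨ (t : ℕ) = n - k - 1 ∨ (t : ℕ) = n - k
      ∨ (t : ℕ) = n - k + 1) with htv | htv | htv | htv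
  · have h := hcoeff (t : ℕ)
    rw [Finset.sum_eq_single t (fun b _ hb => ?_) (by simp)] at h
    · simp only [hq, if_pos htv, Polynomial.coeff_X_pow] at h
      simpa using h
    · have hbv : ¬ ((t : ℕ) = (b : ℕ)) := fun hc => hb (Fin.ext hc.symm)
      have hblt : (b : ℕ) < n - k + 2 := b.isLt
      simp only [hq]
      split_ifs with h1' h2' h3'
      · rw [Polynomial.coeff_X_pow, if_neg hbv, mul_zero]
      · rw [Polynomial.coeff_sub, Polynomial.coeff_C_mul, Polynomial.coeff_X_pow,
          Polynomial.coeff_X_pow, if_neg (show ¬ ((t:ℕ) = n - k) by omega),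
          if_neg (show ¬ ((t:ℕ) = n - k - 1) by omega)]
        ring
      · rw [Polynomial.coeff_X_pow, if_neg (show ¬ ((t:ℕ) = n - k - 1) by omega), mul_zero]
      · rw [Polynomial.coeff_X_pow, if_neg (show ¬ ((t:ℕ) = n - k + 1) by omega), mul_zero]
  · have h := hcoeff (n - k)
    rw [Finset.sum_eq_single t (fun b _ hb => ?_) (by simp)] at h
    · simp only [hq, if_neg (show ¬ (t : ℕ) < n - k - 1 by omega), if_pos htv] at h
      rw [Polynomial.coeff_sub, Polynomial.coeff_X_pow, if_pos rfl,
        Polynomial.coeff_C_mul, Polynomial.coeff_X_pow, if_neg (by omega)] at h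
      simpa using h
    · have hbv : ¬ ((b : ℕ) = (t : ℕ)) := fun hc => hb (Fin.ext hc)
      have hblt : (b : ℕ) < n - k + 2 := b.isLt
      simp only [hq]
      split_ifs with h1' h2' h3'
      · rw [Polynomial.coeff_X_pow, if_neg (show ¬ (n - k = (b:ℕ)) by omega), mul_zero]
      · exact absurd (h2'.trans htv.symm) hbv
      · rw [Polynomial.coeff_X_pow, if_neg (show ¬ (n - k = n - k - 1) by omega), mul_zero]
      · rw [Polynomial.coeff_X_pow, if_neg (show ¬ (n - k = n - k + 1) by omega), mul_zero]
  · have ht' : t = t0 := Fin.ext htv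
    rw [ht']; exact h0
  · have ht' : t = t1 := Fin.ext htv
    rw [ht']; exact h1

end LI


section GLI
variable {F : Type*} [Field F] {n : ℕ}

lemma expo_le (k : ℕ) (i : Fin k) : expo k 1 i ≤ k := by
  have := i.isLt
  rw [expo]; split <;> omega

lemma expo_inj (k : ℕ) : Function.Injective (fun i : Fin k => expo k 1 i) := by
  intro a b hab
  have ha := a.isLt
  have hb := b.isLt
  simp only [expo] at hab
  refine Fin.ext ?_
  split_ifs at hab <;> omega

theorem G_li (α : Fin n → F) (hα : Function.Injective α) (δ : F) (k : ℕ)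
    (h6 : 6 ≤ 2 * k) (hkn : 2 * k ≤ n) :
    LinearIndependent F (fun i => G2 α k 1 δ i) := by
  have hk3 : 3 ≤ k := by omega
  have hn : k + 3 ≤ n := by omega
  rw [Fintype.linearIndependent_iff]
  intro g hg
  have hg' : ∀ j : Fin (n + 2), ∑ s, g s * G2 α k 1 δ s j = 0 := fun j => by
    have h := congrFun hg j
    simpa [Finset.sum_apply] using h
  set Q : Polynomial F := ∑ s : Fin k, Polynomial.C (g s) * Polynomial.X ^ expo k 1 s with hQ
  have hQeval : ∀ j : Fin n, Q.eval (α j) = 0 := by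
    intro j
    have h := hg' ⟨(j : ℕ), by omega⟩
    rw [Finset.sum_congr rfl (fun s _ => by rw [G2_apply_lt])] at h
    rw [hQ, Polynomial.eval_finset_sum, ← h]
    refine Finset.sum_congr rfl fun s _ => by simp
  have hQz : Q = 0 := by
    refine Polynomial.eq_zero_of_natDegree_lt_card_of_eval_eq_zero Q hα hQeval ?_
    rw [Fintype.card_fin]
    refine lt_of_le_of_lt (Polynomial.natDegree_sum_le _ _) ?_
    rw [Finset.fold_max_lt]
    refine ⟨by omega, fun s _ => ?_⟩
    refine lt_of_le_of_lt (le_trans (Polynomial.natDegree_C_mul_le _ _)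
      (Polynomial.natDegree_X_pow_le _)) ?_
    have := expo_le k s
    omega
  intro t
  have h := congrArg (fun p => Polynomial.coeff p (expo k 1 t)) hQz
  simp only [hQ, Polynomial.finset_sum_coeff, Polynomial.coeff_C_mul,
    Polynomial.coeff_X_pow, Polynomial.coeff_zero] at h
  rw [Finset.sum_eq_single t (fun b _ hb => by
      rw [if_neg (fun hc => hb (expo_inj k hc.symm)), mul_zero])
    (by simp)] at h
  simpa using h

end GLI

/-- Proposition 5.2: for `r = 1`, `H_2` is a parity check matrix for the code `C_2`
generated by `G_2`. -/
theorem H2r1_parity_check {F : Type*} [Field F] [Fintype F] {n : ℕ}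
    (α : Fin n → F) (hα : Function.Injective α) (δ : F) (k : ℕ)
    (h6 : 6 ≤ 2 * k) (hkn : 2 * k ≤ n) :
    G2 α k 1 δ * (H2r1 α k δ)ᵀ = 0 ∧
    LinearIndependent F (fun i => H2r1 α k δ i) ∧
    (rowSpan (H2r1 α k δ) : Set (Fin (n + 2) → F))
      = dualSet (rowSpan (G2 α k 1 δ) : Set (Fin (n + 2) → F)) := by
  have hGH := GH_zero α hα δ k h6 hkn
  have hHli := H_li α hα δ k h6 hkn
  have hGli := G_li α hα δ k h6 hkn
  refine ⟨hGH, hHli, ?_⟩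
  set G := G2 α k 1 δ with hG
  set H := H2r1 α k δ with hH
  set K := LinearMap.ker G.mulVecLin with hK
  have hdual : dualSet (rowSpan G : Set (Fin (n + 2) → F)) = (K : Set (Fin (n + 2) → F)) := by
    ext x
    simp only [SetLike.mem_coe, LinearMap.mem_ker, dualSet, Set.mem_setOf_eq]
    constructor
    · intro hx
      funext i
      have h := hx (G i) (Submodule.subset_span ⟨i, rfl⟩)
      simp only [Matrix.mulVecLin_apply, Matrix.mulVec, dotProduct, Pi.zero_apply]
      rw [← h]
      exact Finset.sum_congr rfl fun j _ => mul_comm _ _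
    · intro hx c hc
      let φ : (Fin (n + 2) → F) →ₗ[F] F :=
        { toFun := fun c => ∑ i, x i * c i
          map_add' := fun a b => by
            simp [mul_add, Finset.sum_add_distrib]
          map_smul' := fun m a => by
            simp [Finset.mul_sum, mul_left_comm] }
      have hle : rowSpan G ≤ LinearMap.ker φ := by
        rw [rowSpan, Submodule.span_le]
        rintro _ ⟨i, rfl⟩
        have h := congrFun hx i
        simp only [Matrix.mulVecLin_apply, Matrix.mulVec, dotProduct,
          Pi.zero_apply] at h
        simp only [SetLike.mem_coe, LinearMap.mem_ker, φ, LinearMap.coe_mk, AddHom.coe_mk]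
        rw [← h]
        exact Finset.sum_congr rfl fun j _ => mul_comm _ _
      exact hle hc
  have hHsubK : rowSpan H ≤ K := by
    rw [rowSpan, Submodule.span_le]
    rintro _ ⟨t, rfl⟩
    simp only [SetLike.mem_coe, LinearMap.mem_ker]
    funext i
    have h := congrFun (congrFun hGH i) t
    rw [Matrix.mul_apply] at h
    simp only [Matrix.transpose_apply, Matrix.zero_apply] at h
    simpa [Matrix.mulVecLin_apply, Matrix.mulVec, dotProduct] using h
  have h1 : Module.finrank F (rowSpan H) = n - k + 2 := by
    rw [rowSpan, finrank_span_eq_card hHli, Fintype.card_fin]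
  have hrank : G.rank = k := by
    rw [Matrix.rank_eq_finrank_span_row, Matrix.row, ← rowSpan, rowSpan, finrank_span_eq_card hGli,
      Fintype.card_fin]
  have h2 : G.rank + Module.finrank F K = n + 2 := by
    rw [Matrix.rank, hK]
    rw [LinearMap.finrank_range_add_finrank_ker G.mulVecLin, Module.finrank_fin_fun]
  have hHK : rowSpan H = K := by
    refine Submodule.eq_of_le_of_finrank_eq hHsubK ?_
    rw [h1]
    omega
  rw [hHK, hdual]
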